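/- Let $J$ be a closed subspace of a Banach space $X$ that is an ideal in $X$ with projection $\mathcal{Q}$ on $X^*$ (kernel $J^\perp$, $\|\mathcal{Q}\|\le 1$). Suppose $\|\mathrm{Id}_{X^*}-\lambda\mathcal{Q}\|\le 1$ for some $\lambda\in(0,2]$. Then for each $x\in B_X$ there exists a net $(y_\alpha)\subset J$ such that $y_\alpha\to x$ in the $\sigma(X,J^*)$-topology (i.e. $\mathcal{Q}x^*(y_\alpha)\to \mathcal{Q}x^*(x)$ for all $x^*\in X^*$) and $\limsup_\alpha\|x-\lambda y_\alpha\|\le 1$. -/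

import Mathlib

open Filter
set_option maxHeartbeats 1000000

variable {X : Type u} [NormedAddCommGroup X] [NormedSpace ℝ X]

lemma key_lemma (J : Submodule ℝ X) (hJc : IsClosed (J : Set X))
    (Q : (X →L[ℝ] ℝ) →L[ℝ] (X →L[ℝ] ℝ))
    (hproj : ∀ f, Q (Q f) = Q f)
    (hker : ∀ f, Q f = 0 ↔ ∀ y ∈ J, f y = 0)
    (lam : ℝ) (hlam0 : 0 < lam)
    (hId : ‖ContinuousLinearMap.id ℝ (X →L[ℝ] ℝ) - lam • Q‖ ≤ 1)
    (x : X) (hx : ‖x‖ ≤ 1) (F : Finset (X →L[ℝ] ℝ)) (ε : ℝ) (hε : 0 < ε) :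
    ∃ y, y ∈ J ∧ (∀ g ∈ F, Q g y = Q g x) ∧ ‖x - lam • y‖ ≤ 1 + ε := by
  classical
  have hQJ : ∀ (g : X →L[ℝ] ℝ), ∀ y ∈ J, Q g y = g y := by
    intro g y hy
    have h1 : Q (Q g - g) = 0 := by rw [map_sub, hproj, sub_self]
    have h2 := (hker _).1 h1 y hy
    simpa [sub_eq_zero] using h2
  -- the restriction map
  set Tl : J →ₗ[ℝ] ({g // g ∈ F} → ℝ) :=
    LinearMap.pi (fun g => (g.1.toLinearMap).comp J.subtype) with hTl
  set c : {g // g ∈ F} → ℝ := fun g => Q g.1 x with hcdef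
  have hc : c ∈ LinearMap.range Tl := by
    by_contra hc
    set V := LinearMap.range Tl with hV
    have hπ : V.mkQ c ≠ 0 := by
      simpa [Submodule.mkQ_apply, Submodule.Quotient.mk_eq_zero] using hc
    obtain ⟨φ, hφ⟩ : ∃ φ : Module.Dual ℝ (({g // g ∈ F} → ℝ) ⧸ V), φ (V.mkQ c) ≠ 0 := by
      by_contra h
      push_neg at h
      exact hπ ((Module.forall_dual_apply_eq_zero_iff ℝ _).1 h)
    set ψ : ({g // g ∈ F} → ℝ) →ₗ[ℝ] ℝ := φ ∘ₗ V.mkQ with hψdef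
    have hψV : ∀ v ∈ V, ψ v = 0 := by
      intro v hv
      have : V.mkQ v = 0 := by
        simpa [Submodule.mkQ_apply, Submodule.Quotient.mk_eq_zero] using hv
      simp [hψdef, this]
    set a : {g // g ∈ F} → ℝ := fun g => ψ (fun j => if g = j then 1 else 0) with hadef
    have hψ : ∀ v, ψ v = ∑ g, v g • a g := fun v => ψ.pi_apply_eq_sum_univ v
    set G : X →L[ℝ] ℝ := ∑ g : {g // g ∈ F}, a g • g.1 with hGdef
    have hGJ : ∀ y ∈ J, G y = 0 := by
      intro y hy
      have h0 : ψ (Tl ⟨y, hy⟩) = 0 := hψV _ ⟨⟨y, hy⟩, rfl⟩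
      rw [hψ] at h0
      have : G y = ∑ g : {g // g ∈ F}, (Tl ⟨y, hy⟩) g • a g := by
        simp [hGdef, hTl, ContinuousLinearMap.sum_apply, LinearMap.pi_apply,
          smul_eq_mul, mul_comm]
      rw [this, h0]
    have hQG : Q G = 0 := (hker G).2 hGJ
    have hQG2 : Q G = ∑ g : {g // g ∈ F}, a g • Q g.1 := by
      simp [hGdef, map_sum, map_smul]
    have : ψ c = 0 := by
      rw [hψ]
      have h3 : (Q G) x = 0 := by rw [hQG]; rfl
      rw [hQG2] at h3
      simpa [hcdef, ContinuousLinearMap.sum_apply, smul_eq_mul, mul_comm] using h3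
    exact hφ this
  obtain ⟨y₀, hy₀⟩ := hc
  have hy₀g : ∀ g : {g // g ∈ F}, g.1 (y₀ : X) = Q g.1 x := by
    intro g
    have := congrFun hy₀ g
    simpa [hTl, LinearMap.pi_apply] using this
  -- the subspace J₀
  set J₀ : Submodule ℝ X := J ⊓ ⨅ g : {g // g ∈ F}, LinearMap.ker (g.1 : X →ₗ[ℝ] ℝ) with hJ₀def
  have hJ₀c : IsClosed (J₀ : Set X) := by
    have : (J₀ : Set X) = (J : Set X) ∩ ⋂ g : {g // g ∈ F}, (LinearMap.ker (g.1 : X →ₗ[ℝ] ℝ) : Set X) := by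
      simp [hJ₀def, Submodule.coe_iInf]
    rw [this]
    exact hJc.inter (isClosed_iInter fun g => ContinuousLinearMap.isClosed_ker g.1)
  haveI : IsClosed (J₀ : Set X) := hJ₀c
  set v : X := x - lam • (y₀ : X) with hvdef
  -- key norm estimate in the quotient
  have hnorm : ‖J₀.mkQ v‖ ≤ 1 := by
    by_contra hlt
    push_neg at hlt
    have hne : J₀.mkQ v ≠ 0 := by
      intro h0
      rw [h0, norm_zero] at hlt; linarith
    obtain ⟨gZ, hgZ1, hgZ2⟩ := exists_dual_vector ℝ (J₀.mkQ v) (ne_of_gt (lt_trans zero_lt_one hlt))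
    set f₀ : X →ₗ[ℝ] ℝ := gZ.toLinearMap ∘ₗ J₀.mkQ with hf₀def
    have hbound : ∀ z : X, ‖f₀ z‖ ≤ 1 * ‖z‖ := by
      intro z
      calc ‖f₀ z‖ = ‖gZ (J₀.mkQ z)‖ := rfl
        _ ≤ ‖gZ‖ * ‖J₀.mkQ z‖ := gZ.le_opNorm _
        _ ≤ 1 * ‖z‖ := by
            rw [hgZ1, one_mul, one_mul]
            exact Submodule.Quotient.norm_mk_le _ _
    set f : X →L[ℝ] ℝ := f₀.mkContinuous 1 hbound with hfdef
    have hfnorm : ‖f‖ ≤ 1 := f₀.mkContinuous_norm_le zero_le_one hbound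
    have hfJ₀ : ∀ z ∈ J₀, f z = 0 := by
      intro z hz
      have : J₀.mkQ z = 0 := by
        simpa [Submodule.mkQ_apply, Submodule.Quotient.mk_eq_zero] using hz
      show gZ (J₀.mkQ z) = 0
      rw [this, map_zero]
    have hfv : (1 : ℝ) < f v := by
      have : f v = ‖J₀.mkQ v‖ := hgZ2
      rw [this]; exact hlt
    -- decompose f on J
    set L : {g // g ∈ F} → (J →ₗ[ℝ] ℝ) := fun g => (g.1.toLinearMap).comp J.subtype with hLdef
    set K : J →ₗ[ℝ] ℝ := (f.toLinearMap).comp J.subtype with hKdef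
    have hkerle : (⨅ g, LinearMap.ker (L g)) ≤ LinearMap.ker K := by
      intro y hy
      rw [Submodule.mem_iInf] at hy
      have hyJ₀ : (y : X) ∈ J₀ := by
        refine Submodule.mem_inf.2 ⟨y.2, ?_⟩
        rw [Submodule.mem_iInf]
        intro g
        exact hy g
      simpa [hKdef] using hfJ₀ _ hyJ₀
    have hspan := mem_span_of_iInf_ker_le_ker hkerle
    rw [Submodule.mem_span_range_iff_exists_fun] at hspan
    obtain ⟨a, ha⟩ := hspan
    -- h vanishes on J
    set h : X →L[ℝ] ℝ := f - ∑ g : {g // g ∈ F}, a g • g.1 with hhdef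
    have hhJ : ∀ y ∈ J, h y = 0 := by
      intro y hy
      have := congrFun (congrArg DFunLike.coe ha) ⟨y, hy⟩
      simp only [LinearMap.coe_sum, Finset.sum_apply, LinearMap.smul_apply] at this
      simp only [hhdef, ContinuousLinearMap.sub_apply, ContinuousLinearMap.sum_apply,
        ContinuousLinearMap.coe_smul', Pi.smul_apply]
      have h1 : (∑ g : {g // g ∈ F}, a g • (L g) ⟨y, hy⟩) = K ⟨y, hy⟩ := this
      simp only [hLdef, hKdef, LinearMap.coe_comp, Function.comp_apply,
        Submodule.coe_subtype, LinearMap.smul_apply, smul_eq_mul,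
        ContinuousLinearMap.coe_coe] at h1
      rw [sub_eq_zero]
      exact h1.symm
    have hQh : Q h = 0 := (hker h).2 hhJ
    have hQf : Q f = ∑ g : {g // g ∈ F}, a g • Q g.1 := by
      have h4 : Q f = Q h + Q (∑ g : {g // g ∈ F}, a g • g.1) := by
        rw [← map_add]; congr 1; rw [hhdef]; exact (sub_add_cancel _ _).symm
      rw [h4, hQh, zero_add, map_sum]
      exact Finset.sum_congr rfl fun g _ => map_smul Q _ _
    have hfy₀ : f (y₀ : X) = (Q f) x := by
      have h1 : f (y₀ : X) = ∑ g : {g // g ∈ F}, a g * g.1 (y₀ : X) := by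
        have := congrFun (congrArg DFunLike.coe ha) y₀
        simp only [LinearMap.coe_sum, Finset.sum_apply, LinearMap.smul_apply,
          hLdef, hKdef, LinearMap.coe_comp, Function.comp_apply,
          Submodule.coe_subtype, smul_eq_mul, ContinuousLinearMap.coe_coe] at this
        exact this.symm
      rw [h1, hQf]
      simp only [ContinuousLinearMap.sum_apply, ContinuousLinearMap.coe_smul',
        Pi.smul_apply, smul_eq_mul]
      exact Finset.sum_congr rfl fun g _ => by rw [hy₀g g]
    have hcontr : f v ≤ 1 := by
      have h1 : f v = ((ContinuousLinearMap.id ℝ (X →L[ℝ] ℝ) - lam • Q) f) x := by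
        simp only [ContinuousLinearMap.sub_apply, ContinuousLinearMap.id_apply,
          ContinuousLinearMap.smul_apply, ContinuousLinearMap.coe_smul', Pi.smul_apply,
          smul_eq_mul, hvdef]
        rw [map_sub, map_smul]
        rw [hfy₀]
        simp [smul_eq_mul]
      rw [h1]
      calc ((ContinuousLinearMap.id ℝ (X →L[ℝ] ℝ) - lam • Q) f) x
          ≤ ‖((ContinuousLinearMap.id ℝ (X →L[ℝ] ℝ) - lam • Q) f) x‖ := le_abs_self _
        _ ≤ ‖(ContinuousLinearMap.id ℝ (X →L[ℝ] ℝ) - lam • Q) f‖ * ‖x‖ :=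
            ContinuousLinearMap.le_opNorm _ _
        _ ≤ (‖ContinuousLinearMap.id ℝ (X →L[ℝ] ℝ) - lam • Q‖ * ‖f‖) * ‖x‖ := by
            gcongr
            exact ContinuousLinearMap.le_opNorm _ _
        _ ≤ (1:ℝ) := by
            have n1 : (0:ℝ) ≤ ‖f‖ := norm_nonneg _
            have n2 : (0:ℝ) ≤ ‖x‖ := norm_nonneg _
            exact mul_le_one₀ (mul_le_one₀ hId n1 hfnorm) n2 hx
    linarith
  -- extract the element
  obtain ⟨m, hm, hmlt⟩ := Submodule.Quotient.norm_mk_lt (J₀.mkQ v) hε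
  have hmem : v - m ∈ J₀ := by
    have : Submodule.Quotient.mk v = Submodule.Quotient.mk m := hm.symm
    exact (Submodule.Quotient.eq J₀).1 this
  set j : X := v - m with hjdef
  refine ⟨(y₀ : X) + lam⁻¹ • j, ?_, ?_, ?_⟩
  · exact J.add_mem y₀.2 (J.smul_mem _ (Submodule.mem_inf.1 hmem).1)
  · intro g hg
    have hjker : g j = 0 := by
      have h1 : j ∈ (⨅ g : {g // g ∈ F}, LinearMap.ker (g.1 : X →ₗ[ℝ] ℝ)) := (Submodule.mem_inf.1 hmem).2
      rw [Submodule.mem_iInf] at h1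
      exact h1 ⟨g, hg⟩
    have hyJ : (y₀ : X) + lam⁻¹ • j ∈ J := J.add_mem y₀.2 (J.smul_mem _ (Submodule.mem_inf.1 hmem).1)
    rw [hQJ g _ hyJ, map_add, map_smul]
    rw [hjker, smul_zero, add_zero]
    exact hy₀g ⟨g, hg⟩
  · have heq : x - lam • ((y₀ : X) + lam⁻¹ • j) = m := by
      rw [smul_add, smul_smul, mul_inv_cancel₀ hlam0.ne', one_smul]
      rw [hjdef, hvdef]
      abel
    rw [heq]
    have : ‖J₀.mkQ v‖ ≤ 1 := hnorm
    linarith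

theorem stmt5 {X : Type u} [NormedAddCommGroup X] [NormedSpace ℝ X] [CompleteSpace X]
    (J : Submodule ℝ X) (hJc : IsClosed (J : Set X))
    (Q : (X →L[ℝ] ℝ) →L[ℝ] (X →L[ℝ] ℝ))
    (hproj : ∀ f, Q (Q f) = Q f) (hQnorm : ‖Q‖ ≤ 1)
    (hker : ∀ f, Q f = 0 ↔ ∀ y ∈ J, f y = 0)
    (lam : ℝ) (hlam0 : 0 < lam) (hlam2 : lam ≤ 2)
    (hId : ‖ContinuousLinearMap.id ℝ (X →L[ℝ] ℝ) - lam • Q‖ ≤ 1) :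
    ∀ x : X, ‖x‖ ≤ 1 →
      ∃ (ι : Type u) (l : Filter ι) (y : ι → X), l.NeBot ∧ (∀ α, y α ∈ J) ∧
        (∀ g : X →L[ℝ] ℝ, Tendsto (fun α => Q g (y α)) l (nhds (Q g x))) ∧
        limsup (fun α => ‖x - lam • y α‖) l ≤ 1 := by
  intro x hx
  classical
  have hch : ∀ (F : Finset (X →L[ℝ] ℝ)) (n : ℕ), ∃ y, y ∈ J ∧ (∀ g ∈ F, Q g y = Q g x) ∧
      ‖x - lam • y‖ ≤ 1 + 1 / (n + 1) := fun F n =>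
    key_lemma J hJc Q hproj hker lam hlam0 hId x hx F _ (by positivity)
  choose y hyJ hyQ hyN using fun (p : Finset (X →L[ℝ] ℝ) × ULift.{u} ℕ) => hch p.1 p.2.down
  refine ⟨Finset (X →L[ℝ] ℝ) × ULift.{u} ℕ, atTop, y, atTop_neBot, hyJ, ?_, ?_⟩
  · intro g
    have hev : ∀ᶠ p in (atTop : Filter (Finset (X →L[ℝ] ℝ) × ULift.{u} ℕ)),
        Q g (y p) = Q g x := by
      rw [eventually_atTop]
      exact ⟨({g}, ULift.up 0), fun p hp =>
        hyQ p g (Finset.singleton_subset_iff.1 hp.1)⟩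
    exact tendsto_const_nhds.congr' (hev.mono fun p h => h.symm)
  · have hcb : IsCoboundedUnder (· ≤ ·) (atTop : Filter (Finset (X →L[ℝ] ℝ) × ULift.{u} ℕ))
        (fun p => ‖x - lam • y p‖) :=
      isCoboundedUnder_le_of_le _ (x := 0) (fun p => norm_nonneg _)
    refine le_of_forall_pos_le_add ?_
    intro δ hδ
    obtain ⟨N, hN⟩ := exists_nat_one_div_lt hδ
    refine limsup_le_of_le hcb ?_
    rw [eventually_atTop]
    refine ⟨(∅, ULift.up N), fun p hp => ?_⟩
    have hNp : (N : ℝ) ≤ p.2.down := by exact_mod_cast (hp.2 : ULift.up N ≤ p.2)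
    have h1 : 1 / ((p.2.down : ℝ) + 1) ≤ 1 / ((N : ℝ) + 1) := by
      apply one_div_le_one_div_of_le <;> [positivity; linarith]
    calc ‖x - lam • y p‖ ≤ 1 + 1 / ((p.2.down : ℝ) + 1) := hyN p
      _ ≤ 1 + 1 / ((N : ℝ) + 1) := by linarith
      _ ≤ 1 + δ := by linarith
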